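/- Let A be an associative ℂ-algebra with elements a, b, let E be the exterior algebra over ℂ on generators ζ_0, ζ_1, …, ζ_{2k} (k ≥ 1), and let B = A ⊗_ℂ E. Set x_1 = a ⊗ ζ_0 + b ⊗ ζ_1 and x_i = 1 ⊗ ζ_i for i = 2, …, 2k. Then [x_1, [x_1,x_2]·[x_3,x_4]·…·[x_{2k−1},x_{2k}]] = 2^{k+1} · [a,b] ⊗ (ζ_0 ζ_1 ζ_2 ⋯ ζ_{2k}) in B. -/

import Mathlib

open TensorProduct

/-- The exterior (Grassmann) algebra over ℂ on generators `ζ_0, …, ζ_{2k}`. -/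
abbrev ExtAlg (k : ℕ) := ExteriorAlgebra ℂ (Fin (2 * k + 1) → ℂ)

/-- The generators `ζ_i` of the exterior algebra. -/
noncomputable def ζ (k : ℕ) (i : Fin (2 * k + 1)) : ExtAlg k :=
  ExteriorAlgebra.ι ℂ (Pi.single i 1)

/-- The elements `x_1 = a ⊗ ζ_0 + b ⊗ ζ_1` and `x_i = 1 ⊗ ζ_i` (for `i ≥ 2`) of `B = A ⊗ E`. -/
noncomputable def xElt (k : ℕ) (A : Type*) [Ring A] [Algebra ℂ A] (a b : A)
    (i : Fin (2 * k + 1)) : A ⊗[ℂ] ExtAlg k :=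
  if i.val = 1 then a ⊗ₜ[ℂ] ζ k ⟨0, Nat.succ_pos _⟩ + b ⊗ₜ[ℂ] ζ k i
  else (1 : A) ⊗ₜ[ℂ] ζ k i

/- ### Auxiliary definitions and lemmas -/

/-- Nat-indexed version of the vector whose `ι` is `ζ`. -/
noncomputable def ηv (k : ℕ) (i : ℕ) : Fin (2 * k + 1) → ℂ :=
  Pi.single (⟨i % (2 * k + 1), Nat.mod_lt _ (by omega)⟩ : Fin (2 * k + 1)) 1

/-- Nat-indexed generators. -/
noncomputable def η (k : ℕ) (i : ℕ) : ExtAlg k := ExteriorAlgebra.ι ℂ (ηv k i)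

lemma η_eq_ζ (k i : ℕ) (h : i < 2 * k + 1) : η k i = ζ k ⟨i, h⟩ := by
  simp [η, ηv, ζ, Nat.mod_eq_of_lt h]

lemma ι_anticomm {k : ℕ} (m n : Fin (2 * k + 1) → ℂ) :
    ExteriorAlgebra.ι ℂ m * ExteriorAlgebra.ι ℂ n
      = -(ExteriorAlgebra.ι ℂ n * ExteriorAlgebra.ι ℂ m) :=
  eq_neg_of_add_eq_zero_left (ExteriorAlgebra.ι_add_mul_swap m n)

lemma η_anticomm (k i j : ℕ) : η k i * η k j = -(η k j * η k i) := ι_anticomm _ _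

lemma η_sq (k i : ℕ) : η k i * η k i = 0 := ExteriorAlgebra.ι_sq_zero _

lemma ofFn_eq_range_map {α : Type*} {n : ℕ} (f : Fin n → α) (g : ℕ → α)
    (h : ∀ i : Fin n, f i = g i.val) :
    List.ofFn f = (List.range n).map g := by
  apply List.ext_getElem
  · simp
  · intro i h1 h2
    simp only [List.getElem_ofFn, List.getElem_map, List.getElem_range]
    exact h _

/-- A product of `ι`'s swaps past a single `ι` with sign `(-1)^length`. -/
lemma prod_map_ι_mul {k : ℕ} (L : List (Fin (2 * k + 1) → ℂ)) (v : Fin (2 * k + 1) → ℂ) :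
    (L.map (ExteriorAlgebra.ι ℂ)).prod * ExteriorAlgebra.ι ℂ v
      = ((-1 : ℂ) ^ L.length) •
        (ExteriorAlgebra.ι ℂ v * (L.map (ExteriorAlgebra.ι ℂ)).prod) := by
  induction L with
  | nil => simp
  | cons m L ih =>
      simp only [List.map_cons, List.prod_cons, List.length_cons]
      rw [mul_assoc, ih, mul_smul_comm, ← mul_assoc, ι_anticomm m v, neg_mul, mul_assoc,
        smul_neg, ← neg_smul, pow_succ, mul_comm ((-1 : ℂ) ^ L.length) (-1 : ℂ)]
      rw [mul_smul]
      simp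

/-- The tail product `ζ_2 ζ_3 ⋯ ζ_{m+1}` (nat-indexed). -/
noncomputable def Tprod (k m : ℕ) : ExtAlg k :=
  ((List.range m).map (fun i => η k (i + 2))).prod

lemma Tprod_mul_η (k m : ℕ) (i : ℕ) :
    Tprod k m * η k i = ((-1 : ℂ) ^ m) • (η k i * Tprod k m) := by
  have h : Tprod k m
      = (((List.range m).map (fun i => ηv k (i + 2))).map (ExteriorAlgebra.ι ℂ)).prod := by
    rw [List.map_map]; rfl
  rw [h]
  simpa [η] using prod_map_ι_mul ((List.range m).map (fun i => ηv k (i + 2))) (ηv k i)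

lemma Tprod_succ (k m : ℕ) : Tprod k (m + 1) = Tprod k m * η k (m + 2) := by
  simp [Tprod, List.range_succ]

section Main
variable (k : ℕ) (A : Type*) [Ring A] [Algebra ℂ A] (a b : A)

/-- Nat-indexed version of `xElt`. -/
noncomputable def xn (i : ℕ) : A ⊗[ℂ] ExtAlg k :=
  xElt k A a b ⟨i % (2 * k + 1), Nat.mod_lt _ (Nat.succ_pos _)⟩

/-- The element `x_1`. -/
noncomputable def x1 : A ⊗[ℂ] ExtAlg k := a ⊗ₜ[ℂ] η k 0 + b ⊗ₜ[ℂ] η k 1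

/-- The commutators `[x_{2j+1}, x_{2j+2}]`, nat-indexed. -/
noncomputable def cg (j : ℕ) : A ⊗[ℂ] ExtAlg k :=
  xn k A a b (2 * j + 1) * xn k A a b (2 * j + 2)
    - xn k A a b (2 * j + 2) * xn k A a b (2 * j + 1)

lemma xElt_eq_xn (i : ℕ) (h : i < 2 * k + 1) : xElt k A a b ⟨i, h⟩ = xn k A a b i := by
  unfold xn
  congr 1
  exact Fin.ext (Nat.mod_eq_of_lt h).symm

lemma xn_one (hk : 1 ≤ k) : xn k A a b 1 = x1 k A a b := by
  have h1 : (1 : ℕ) % (2 * k + 1) = 1 := Nat.mod_eq_of_lt (show 1 < 2 * k + 1 by omega)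
  unfold xn x1
  simp only [xElt, h1]
  rw [if_true, η_eq_ζ k 0 (show 0 < 2 * k + 1 by omega),
    η_eq_ζ k 1 (show 1 < 2 * k + 1 by omega)]

lemma xn_hi (i : ℕ) (h2 : 2 ≤ i) (hlt : i < 2 * k + 1) :
    xn k A a b i = (1 : A) ⊗ₜ[ℂ] η k i := by
  have h1 : i % (2 * k + 1) = i := Nat.mod_eq_of_lt hlt
  unfold xn
  simp only [xElt, h1]
  rw [if_neg (by omega), η_eq_ζ k i hlt]

lemma cg_hi (j : ℕ) (h1 : 1 ≤ j) (h2 : j < k) :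
    cg k A a b j = (2 : ℂ) • ((1 : A) ⊗ₜ[ℂ] (η k (2 * j + 1) * η k (2 * j + 2))) := by
  unfold cg
  rw [xn_hi k A a b (2 * j + 1) (by omega) (by omega),
    xn_hi k A a b (2 * j + 2) (by omega) (by omega)]
  rw [Algebra.TensorProduct.tmul_mul_tmul, Algebra.TensorProduct.tmul_mul_tmul,
    η_anticomm k (2 * j + 2) (2 * j + 1), one_mul, TensorProduct.tmul_neg, sub_neg_eq_add,
    two_smul]

lemma cg_zero (hk : 1 ≤ k) :
    cg k A a b 0 = (2 : ℂ) • (x1 k A a b * ((1 : A) ⊗ₜ[ℂ] η k 2)) := by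
  unfold cg
  simp only [Nat.mul_zero, Nat.zero_add]
  rw [xn_one k A a b hk, xn_hi k A a b 2 (by omega) (by omega), x1]
  rw [add_mul, mul_add, Algebra.TensorProduct.tmul_mul_tmul,
    Algebra.TensorProduct.tmul_mul_tmul, Algebra.TensorProduct.tmul_mul_tmul,
    Algebra.TensorProduct.tmul_mul_tmul,
    η_anticomm k 2 0, η_anticomm k 2 1]
  simp only [mul_one, one_mul, TensorProduct.tmul_neg]
  rw [two_smul]
  abel

lemma key_prod (m : ℕ) (h1 : 1 ≤ m) (h2 : m ≤ k) :
    ((List.range m).map (cg k A a b)).prod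
      = ((2 : ℂ) ^ m) • (x1 k A a b * ((1 : A) ⊗ₜ[ℂ] Tprod k (2 * m - 1))) := by
  induction m with
  | zero => omega
  | succ n ih =>
      rcases Nat.eq_or_lt_of_le (Nat.one_le_iff_ne_zero.mpr (Nat.succ_ne_zero n)) with h | h
      · -- n = 0
        have hn : n = 0 := by omega
        subst hn
        have hr1 : List.range 1 = [0] := by simp [List.range_succ]
        rw [hr1]
        simp only [List.map_cons, List.map_nil, List.prod_cons, List.prod_nil, mul_one]
        rw [cg_zero k A a b (by omega)]
        have hT : Tprod k (2 * (0 + 1) - 1) = η k 2 := by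
          simp [Tprod, List.range_succ]
        rw [hT]
        norm_num
      · -- n ≥ 1
        have hn1 : 1 ≤ n := by omega
        rw [List.range_succ, List.map_append, List.prod_append]
        rw [ih hn1 (by omega)]
        simp only [List.map_cons, List.map_nil, List.prod_cons, List.prod_nil, mul_one]
        rw [cg_hi k A a b n hn1 (by omega)]
        have harith : 2 * (n + 1) - 1 = (2 * n - 1) + 1 + 1 := by omega
        rw [harith, Tprod_succ, Tprod_succ]
        have he2 : 2 * n - 1 + 2 = 2 * n + 1 := by omega
        have he3 : 2 * n - 1 + 1 + 2 = 2 * n + 2 := by omega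
        rw [he2, he3]
        rw [smul_mul_assoc, mul_smul_comm, smul_smul, pow_succ]
        congr 1
        rw [mul_assoc, Algebra.TensorProduct.tmul_mul_tmul, one_mul, mul_assoc]

lemma x1_sq : x1 k A a b * x1 k A a b = (a * b - b * a) ⊗ₜ[ℂ] (η k 0 * η k 1) := by
  unfold x1
  rw [add_mul, mul_add, mul_add, Algebra.TensorProduct.tmul_mul_tmul,
    Algebra.TensorProduct.tmul_mul_tmul, Algebra.TensorProduct.tmul_mul_tmul,
    Algebra.TensorProduct.tmul_mul_tmul, η_sq k 0, η_sq k 1,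
    η_anticomm k 1 0]
  simp only [TensorProduct.tmul_zero, TensorProduct.tmul_neg, TensorProduct.sub_tmul]
  abel

lemma tprod_swap (hk : 1 ≤ k) :
    ((1 : A) ⊗ₜ[ℂ] Tprod k (2 * k - 1)) * x1 k A a b
      = -(x1 k A a b * ((1 : A) ⊗ₜ[ℂ] Tprod k (2 * k - 1))) := by
  have hodd : ((-1 : ℂ)) ^ (2 * k - 1) = -1 := Odd.neg_one_pow ⟨k - 1, by omega⟩
  unfold x1
  rw [mul_add, add_mul, Algebra.TensorProduct.tmul_mul_tmul,
    Algebra.TensorProduct.tmul_mul_tmul, Algebra.TensorProduct.tmul_mul_tmul,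
    Algebra.TensorProduct.tmul_mul_tmul, Tprod_mul_η, Tprod_mul_η, hodd]
  simp only [neg_one_smul, one_mul, mul_one, TensorProduct.tmul_neg, tmul_smul]
  abel

end Main

set_option maxHeartbeats 1600000 in
/-- In `B = A ⊗ E`, with `x_1 = a ⊗ ζ_0 + b ⊗ ζ_1` and `x_i = 1 ⊗ ζ_i`,
`[x_1, [x_1,x_2]·[x_3,x_4]⋯[x_{2k−1},x_{2k}]] = 2^{k+1}·[a,b] ⊗ (ζ_0 ζ_1 ⋯ ζ_{2k})`. -/
theorem stmt_17 (k : ℕ) (hk : 1 ≤ k) (A : Type*) [Ring A] [Algebra ℂ A] (a b : A) :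
    letI x := xElt k A a b
    letI w : A ⊗[ℂ] ExtAlg k :=
      (List.ofFn fun j : Fin k =>
        x ⟨2 * j.val + 1, by have := j.2; omega⟩ * x ⟨2 * j.val + 2, by have := j.2; omega⟩
        - x ⟨2 * j.val + 2, by have := j.2; omega⟩ * x ⟨2 * j.val + 1, by have := j.2; omega⟩).prod
    x ⟨1, by omega⟩ * w - w * x ⟨1, by omega⟩ =
      (2 ^ (k + 1) : ℂ) • ((a * b - b * a) ⊗ₜ[ℂ]
        (List.ofFn fun i : Fin (2 * k + 1) => ζ k i).prod) := by
  have hw : (List.ofFn fun j : Fin k =>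
      xElt k A a b ⟨2 * j.val + 1, by have := j.2; omega⟩ *
        xElt k A a b ⟨2 * j.val + 2, by have := j.2; omega⟩
      - xElt k A a b ⟨2 * j.val + 2, by have := j.2; omega⟩ *
        xElt k A a b ⟨2 * j.val + 1, by have := j.2; omega⟩).prod
      = ((2 : ℂ) ^ k) • (x1 k A a b * ((1 : A) ⊗ₜ[ℂ] Tprod k (2 * k - 1))) := by
    rw [ofFn_eq_range_map _ (cg k A a b) ?_, key_prod k A a b k hk le_rfl]
    intro j
    unfold cg
    rw [xElt_eq_xn k A a b (2 * j.val + 1) (by have := j.2; omega),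
      xElt_eq_xn k A a b (2 * j.val + 2) (by have := j.2; omega)]
  have hP : (List.ofFn fun i : Fin (2 * k + 1) => ζ k i).prod
      = η k 0 * (η k 1 * Tprod k (2 * k - 1)) := by
    rw [ofFn_eq_range_map (fun i : Fin (2 * k + 1) => ζ k i) (η k)
      (fun i => (η_eq_ζ k i.val i.2).symm)]
    have h21 : List.range (2 * k + 1) = List.range ((2 * k - 1) + 1 + 1) :=
      congrArg List.range (by omega)
    rw [h21, List.range_succ_eq_map, List.range_succ_eq_map]
    simp only [List.map_cons, List.prod_cons, List.map_map]
    rfl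
  have hx1' : xElt k A a b ⟨1, by omega⟩ = x1 k A a b := by
    rw [xElt_eq_xn k A a b 1 (by omega), xn_one k A a b hk]
  rw [hx1', hw, hP]
  rw [mul_smul_comm]
  rw [smul_mul_assoc]
  rw [mul_assoc _ _ (x1 k A a b)]
  rw [tprod_swap k A a b hk]
  rw [mul_neg, smul_neg, sub_neg_eq_add]
  rw [← mul_assoc (x1 k A a b) (x1 k A a b), x1_sq]
  rw [Algebra.TensorProduct.tmul_mul_tmul]
  rw [mul_one (a * b - b * a)]
  rw [mul_assoc (η k 0) (η k 1) (Tprod k (2 * k - 1))]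
  rw [← two_smul ℂ
    (((2 : ℂ) ^ k) • ((a * b - b * a) ⊗ₜ[ℂ] (η k 0 * (η k 1 * Tprod k (2 * k - 1)))))]
  rw [smul_smul]
  rw [pow_succ (2 : ℂ) k, mul_comm (2 : ℂ) ((2 : ℂ) ^ k)]
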